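/- Division modulo Q (commutative case of Proposition 3.5). Let P_1,…,P_r ∈ R_C \ R(Q), let ℕ^{n+q} = Δ_1 ∪ ⋯ ∪ Δ_r ∪ Δ̄ be the partition associated with the exponents exp^modQ_≺(P_1),…,exp^modQ_≺(P_r), and set h = ∏_{j=1}^r cp^modQ_≺(P_j) ∈ C \ Q. Then for every P ∈ R_C there exist Q_1,…,Q_r, R, T ∈ R_F such that: (a) P = Σ_j Q_j P_j + R + T; (b) all coefficients of the Q_j, of R and of T lie in the localization C[h^{-1}] ⊆ F; (c) all coefficients of T lie in the ideal Q·C[h^{-1}] generated by Q in C[h^{-1}]; (d) for each j, Q_j = 0 or DN(Q_j) + exp^modQ_≺(P_j) ⊆ Δ_j; (e) R = 0 or DN(R) ⊆ Δ̄. Moreover the tuple (Q_1,…,Q_r,R) is unique modulo elements all of whose coefficients lie in Q·C[h^{-1}]; equivalently, the specializations (Q_1)_Q,…,(Q_r)_Q,(R)_Q ∈ R_{F(Q)} (which are defined since h ∉ Q) are uniquely determined by P. -/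

import Mathlib

/-
Division modulo Q (commutative case of Proposition 3.5).
-/

open Classical

noncomputable section

/-- Exponents in ℕ^{n+q}, written as pairs (α, β) ∈ ℕ^n × ℕ^q. -/
abbrev Expo (n q : ℕ) := (Fin n →₀ ℕ) × (Fin q →₀ ℕ)

/-- The ring R_A = A[[x]][z], polynomials in z = (z_1,…,z_q) over A[[x]]. -/
abbrev Rxz (n q : ℕ) (A : Type) [CommRing A] :=
  MvPolynomial (Fin q) (MvPowerSeries (Fin n) A)

/-- Coefficient c_{α,β} of `P` at the pair exponent `d = (α, β)`. -/
def coeffOf {n q : ℕ} {A : Type} [CommRing A] (P : Rxz n q A) (d : Expo n q) : A :=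
  MvPowerSeries.coeff (R := A) d.1 (MvPolynomial.coeff d.2 P)

/-- Newton diagram DN(P). -/
def newtonDiag {n q : ℕ} {A : Type} [CommRing A] (P : Rxz n q A) : Set (Expo n q) :=
  {d | coeffOf P d ≠ 0}

/-- The linear form L(β) = Σ l_i β_i. -/
def Lform {q : ℕ} (l : Fin q → ℕ) (β : Fin q →₀ ℕ) : ℕ := ∑ i, l i * β i

/-- Total degree |β| of a finitely supported exponent. -/
def degSum {σ : Type} [Fintype σ] (β : σ →₀ ℕ) : ℕ := ∑ i, β i

/-- The order ≺_L built from the linear form given by `l` and the tie-breaking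
monomial order `lt0` (where `lt0 d' d` means `d >₀ d'`). -/
def PrecL {n q : ℕ} (l : Fin q → ℕ) (lt0 : Expo n q → Expo n q → Prop)
    (d d' : Expo n q) : Prop :=
  Lform l d.2 < Lform l d'.2 ∨
    (Lform l d.2 = Lform l d'.2 ∧
      (degSum d.2 < degSum d'.2 ∨
        (degSum d.2 = degSum d'.2 ∧
          (degSum d'.1 < degSum d.1 ∨
            (degSum d.1 = degSum d'.1 ∧ lt0 d' d)))))

/-- `e` is the privileged exponent exp_≺(P): the `prec`-maximum of the Newton diagram of `P`. -/
def IsPrivExp {n q : ℕ} {A : Type} [CommRing A] (prec : Expo n q → Expo n q → Prop)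
    (P : Rxz n q A) (e : Expo n q) : Prop :=
  coeffOf P e ≠ 0 ∧ ∀ d, coeffOf P d ≠ 0 → d = e ∨ prec d e

/-- `v ∈ e + ℕ^{n+q}`. -/
def inShift {n q : ℕ} (e v : Expo n q) : Prop := ∃ γ : Expo n q, v = e + γ

/-- Specialization (·)_P at a prime ideal P of C: apply coefficientwise the natural
map C → C/P → F(P) = Frac(C/P). -/
def specHom {n q : ℕ} {C : Type} [CommRing C] (P : Ideal C) :
    Rxz n q C →+* Rxz n q (FractionRing (C ⧸ P)) :=
  MvPolynomial.map (MvPowerSeries.map (σ := Fin n)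
    ((algebraMap (C ⧸ P) (FractionRing (C ⧸ P))).comp (Ideal.Quotient.mk P)))

/-- Membership in R(Q): all the coefficients of P lie in Q. -/
def allCoeffIn {n q : ℕ} {C : Type} [CommRing C] (Q : Ideal C) (P : Rxz n q C) : Prop :=
  ∀ d, coeffOf P d ∈ Q

/-- The set Exp^modQ_≺(J) = { exp_≺((P)_Q) : P ∈ J \ R(Q) }. -/
def expModQSet {n q : ℕ} {C : Type} [CommRing C]
    (l : Fin q → ℕ) (lt0 : Expo n q → Expo n q → Prop)
    (Q : Ideal C) (J : Ideal (Rxz n q C)) : Set (Expo n q) :=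
  {d | ∃ P ∈ J, ¬ allCoeffIn Q P ∧ IsPrivExp (PrecL l lt0) (specHom Q P) d}

/-- The region Δ_j of the partition of ℕ^{n+q} associated to the exponents e_1,…,e_r:
Δ_j = (e_j + ℕ^{n+q}) \ (Δ_1 ∪ ⋯ ∪ Δ_{j-1}). -/
def DeltaJ {n q r : ℕ} (e : Fin r → Expo n q) (j : Fin r) : Set (Expo n q) :=
  {v | inShift (e j) v ∧ ∀ k, k < j → ¬ inShift (e k) v}

/-- The residual region Δ̄ (complement of the union of the Δ_j). -/
def DeltaBar {n q r : ℕ} (e : Fin r → Expo n q) : Set (Expo n q) :=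
  {v | ∀ j, ¬ inShift (e j) v}

/-- The inclusion R_C → R_F, F = Frac C, applied coefficientwise. -/
def toFracHom {n q : ℕ} {C : Type} [CommRing C] :
    Rxz n q C →+* Rxz n q (FractionRing C) :=
  MvPolynomial.map (MvPowerSeries.map (σ := Fin n) (algebraMap C (FractionRing C)))

/-- `a ∈ F = Frac C` lies in the localization C[h⁻¹] ⊆ F. -/
def inLoc {C : Type} [CommRing C] (h : C) (a : FractionRing C) : Prop :=
  ∃ (c : C) (m : ℕ),
    a * (algebraMap C (FractionRing C) h) ^ m = algebraMap C (FractionRing C) c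

/-- `a ∈ F = Frac C` lies in the ideal Q·C[h⁻¹] of the localization C[h⁻¹]. -/
def inLocIdeal {C : Type} [CommRing C] (h : C) (Q : Ideal C) (a : FractionRing C) : Prop :=
  ∃ c ∈ Q, ∃ m : ℕ,
    a * (algebraMap C (FractionRing C) h) ^ m = algebraMap C (FractionRing C) c

/-- The conditions (a)–(e) on the quotients `Qs`, the remainder `R` and the error
term `T` in the division modulo Q of `F` by `P_1, …, P_r` (with mod-Q privileged
exponents `e_1, …, e_r` and `h` the product of the mod-Q privileged coefficients). -/
def IsDivModQ {n q r : ℕ} {C : Type} [CommRing C]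
    (Q : Ideal C) (h : C) (P : Fin r → Rxz n q C) (e : Fin r → Expo n q)
    (F : Rxz n q C)
    (Qs : Fin r → Rxz n q (FractionRing C)) (R T : Rxz n q (FractionRing C)) : Prop :=
  (toFracHom F = ∑ j, Qs j * toFracHom (P j) + R + T) ∧
  (∀ j d, inLoc h (coeffOf (Qs j) d)) ∧
  (∀ d, inLoc h (coeffOf R d)) ∧
  (∀ d, inLoc h (coeffOf T d)) ∧
  (∀ d, inLocIdeal h Q (coeffOf T d)) ∧
  (∀ j, Qs j = 0 ∨ ∀ d ∈ newtonDiag (Qs j), d + e j ∈ DeltaJ e j) ∧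
  (R = 0 ∨ newtonDiag R ⊆ DeltaBar e)

section CoeffAPI
variable {n q : ℕ} {A : Type} [CommRing A]

lemma coeffOf_add (P Q : Rxz n q A) (d : Expo n q) :
    coeffOf (P + Q) d = coeffOf P d + coeffOf Q d := by
  simp [coeffOf, MvPolynomial.coeff_add]

lemma coeffOf_sub (P Q : Rxz n q A) (d : Expo n q) :
    coeffOf (P - Q) d = coeffOf P d - coeffOf Q d := by
  simp [coeffOf, MvPolynomial.coeff_sub]

lemma coeffOf_zero (d : Expo n q) : coeffOf (0 : Rxz n q A) d = 0 := by
  simp [coeffOf]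

lemma coeffOf_sum {ι : Type*} (s : Finset ι) (g : ι → Rxz n q A) (d : Expo n q) :
    coeffOf (∑ i ∈ s, g i) d = ∑ i ∈ s, coeffOf (g i) d := by
  classical
  induction s using Finset.induction with
  | empty => simp [coeffOf_zero]
  | insert a s h ih => simp [Finset.sum_insert h, coeffOf_add, ih]

lemma coeffOf_mul (P Q : Rxz n q A) (d : Expo n q) :
    coeffOf (P * Q) d = ∑ bp ∈ Finset.HasAntidiagonal.antidiagonal d.2, ∑ ap ∈ Finset.HasAntidiagonal.antidiagonal d.1,
      coeffOf P (ap.1, bp.1) * coeffOf Q (ap.2, bp.2) := by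
  classical
  simp only [coeffOf, MvPolynomial.coeff_mul, map_sum, MvPowerSeries.coeff_mul]

lemma Rxz.ext_coeff {P Q : Rxz n q A} (h : ∀ d, coeffOf P d = coeffOf Q d) : P = Q := by
  apply MvPolynomial.ext
  intro β
  apply MvPowerSeries.ext
  intro α
  exact h (α, β)

lemma coeffOf_map {B : Type} [CommRing B] (φ : A →+* B) (P : Rxz n q A) (d : Expo n q) :
    coeffOf (MvPolynomial.map (MvPowerSeries.map (σ := Fin n) φ) P) d = φ (coeffOf P d) := by
  simp [coeffOf, MvPolynomial.coeff_map, MvPowerSeries.coeff_map]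

-- support facts
lemma coeffOf_ne_zero_mem_support (P : Rxz n q A) (d : Expo n q) (h : coeffOf P d ≠ 0) :
    d.2 ∈ P.support := by
  rw [MvPolynomial.mem_support_iff]
  intro h0
  apply h
  simp [coeffOf, h0]

def mkRxz (S : Finset (Fin q →₀ ℕ)) (g : Expo n q → A) : Rxz n q A :=
  ∑ β ∈ S, MvPolynomial.monomial β ((fun α => g (α, β)) : MvPowerSeries (Fin n) A)
lemma coeffOf_mkRxz (S : Finset (Fin q →₀ ℕ)) (g : Expo n q → A) (d : Expo n q) :
    coeffOf (mkRxz S g) d = if d.2 ∈ S then g d else 0 := by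
  classical
  rw [mkRxz, coeffOf_sum]
  have : ∀ β ∈ S, coeffOf (MvPolynomial.monomial β ((fun α => g (α, β)) : MvPowerSeries (Fin n) A)) d
      = if β = d.2 then g (d.1, β) else 0 := by
    intro β _
    simp only [coeffOf, MvPolynomial.coeff_monomial]
    split
    · next hβ =>
      subst hβ
      have := MvPolynomial.coeff_monomial d.2 d.2 (((fun α => g (α, d.2)) : MvPowerSeries (Fin n) A))
      rw [if_pos rfl] at this
      exact (congrArg (MvPowerSeries.coeff d.1) this).trans rfl
    · next hβ =>
      have := MvPolynomial.coeff_monomial d.2 β (((fun α => g (α, β)) : MvPowerSeries (Fin n) A))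
      rw [if_neg hβ] at this
      exact (congrArg (MvPowerSeries.coeff d.1) this).trans (map_zero _)
  rw [Finset.sum_congr rfl this]
  by_cases h : d.2 ∈ S
  · rw [Finset.sum_eq_single_of_mem d.2 h]
    · simp [h]
    · intro b _ hb; simp [hb]
  · rw [Finset.sum_eq_zero, if_neg h]
    intro b hb
    rw [if_neg]
    intro hc; exact h (hc ▸ hb)

end CoeffAPI

section OrderLemmas
variable {n q : ℕ} (l : Fin q → ℕ) (lt0 : Expo n q → Expo n q → Prop)

lemma Lform_add (a b : Fin q →₀ ℕ) : Lform l (a + b) = Lform l a + Lform l b := by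
  simp [Lform, Finsupp.add_apply, mul_add, Finset.sum_add_distrib]

lemma degSum_add {σ : Type} [Fintype σ] (a b : σ →₀ ℕ) : degSum (a + b) = degSum a + degSum b := by
  simp [degSum, Finsupp.add_apply, Finset.sum_add_distrib]

def psiW (M : ℕ) (β : Fin q →₀ ℕ) : ℕ := degSum β + M * Lform l β

lemma psiW_add (M : ℕ) (a b : Fin q →₀ ℕ) : psiW l M (a + b) = psiW l M a + psiW l M b := by
  simp [psiW, Lform_add, degSum_add]; ring

lemma degSum_le_psiW (M : ℕ) (β : Fin q →₀ ℕ) : degSum β ≤ psiW l M β := Nat.le_add_right _ _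

lemma Lform_le_psiW {M : ℕ} (hM : 1 ≤ M) (β : Fin q →₀ ℕ) : Lform l β ≤ psiW l M β := by
  calc Lform l β ≤ M * Lform l β := Nat.le_mul_of_pos_left _ hM
    _ ≤ psiW l M β := Nat.le_add_left _ _

lemma prec_irrefl (hwf : WellFounded lt0) (d : Expo n q) : ¬ PrecL l lt0 d d := by
  rintro (h | ⟨-, h | ⟨-, h | ⟨-, h⟩⟩⟩)
  · exact lt_irrefl _ h
  · exact lt_irrefl _ h
  · exact lt_irrefl _ h
  · exact (hwf.isIrrefl).1 d h

lemma prec_add {d d' : Expo n q} (h : PrecL l lt0 d d')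
    (hadd : ∀ a b c : Expo n q, lt0 a b → lt0 (a + c) (b + c))
    (c : Expo n q) : PrecL l lt0 (d + c) (d' + c) := by
  rcases h with h | ⟨h1, h | ⟨h2, h | ⟨h4, h5⟩⟩⟩
  · exact Or.inl (by simp only [Prod.snd_add, Lform_add]; omega)
  · exact Or.inr ⟨by simp only [Prod.snd_add, Lform_add]; omega,
      Or.inl (by simp only [Prod.snd_add, degSum_add]; omega)⟩
  · exact Or.inr ⟨by simp only [Prod.snd_add, Lform_add]; omega,
      Or.inr ⟨by simp only [Prod.snd_add, degSum_add]; omega,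
      Or.inl (by simp only [Prod.fst_add, degSum_add]; omega)⟩⟩
  · exact Or.inr ⟨by simp only [Prod.snd_add, Lform_add]; omega,
      Or.inr ⟨by simp only [Prod.snd_add, degSum_add]; omega,
      Or.inr ⟨by simp only [Prod.fst_add, degSum_add]; omega,
        hadd _ _ _ h5⟩⟩⟩

def RRel (M Bp : ℕ) (w v : Expo n q) : Prop :=
  psiW l M w.2 ≤ Bp ∧ psiW l M v.2 ≤ Bp ∧ PrecL l lt0 v w

lemma RRel_wf (M Bp : ℕ) (hM : 1 ≤ M) (hwf : WellFounded lt0) :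
    WellFounded (RRel l lt0 M Bp) := by
  have hlex : WellFounded (Prod.Lex (· < · : ℕ → ℕ → Prop)
      (Prod.Lex (· < · : ℕ → ℕ → Prop) (Prod.Lex (· < · : ℕ → ℕ → Prop) lt0))) :=
    WellFounded.prod_lex (Nat.lt_wfRel.wf)
      (WellFounded.prod_lex (Nat.lt_wfRel.wf) (WellFounded.prod_lex (Nat.lt_wfRel.wf) hwf))
  have := InvImage.wf (r := (Prod.Lex (· < · : ℕ → ℕ → Prop)
      (Prod.Lex (· < · : ℕ → ℕ → Prop) (Prod.Lex (· < · : ℕ → ℕ → Prop) lt0))))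
    (fun v : Expo n q => ((Bp - Lform l v.2, (Bp - degSum v.2, (degSum v.1, v))) :
      ℕ × (ℕ × (ℕ × Expo n q)))) hlex
  apply Subrelation.wf _ this
  rintro w v ⟨hw, hv, hprec⟩
  simp only [InvImage]
  have hLw : Lform l w.2 ≤ Bp := le_trans (Lform_le_psiW l hM _) hw
  have hLv : Lform l v.2 ≤ Bp := le_trans (Lform_le_psiW l hM _) hv
  have hDw : degSum w.2 ≤ Bp := le_trans (degSum_le_psiW l M _) hw
  have hDv : degSum v.2 ≤ Bp := le_trans (degSum_le_psiW l M _) hv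
  rcases hprec with h | ⟨h1, h | ⟨h2, h | ⟨h4, h5⟩⟩⟩
  · exact Prod.Lex.left _ _ (by omega)
  · rw [show Bp - Lform l w.2 = Bp - Lform l v.2 by omega]
    exact Prod.Lex.right _ (Prod.Lex.left _ _ (by omega))
  · rw [show Bp - Lform l w.2 = Bp - Lform l v.2 by omega,
      show Bp - degSum w.2 = Bp - degSum v.2 by omega]
    exact Prod.Lex.right _ (Prod.Lex.right _ (Prod.Lex.left _ _ h))
  · rw [show Bp - Lform l w.2 = Bp - Lform l v.2 by omega,
      show Bp - degSum w.2 = Bp - degSum v.2 by omega, h4]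
    exact Prod.Lex.right _ (Prod.Lex.right _ (Prod.Lex.right _ h5))

end OrderLemmas

section DeltaLemmas
variable {n q r : ℕ} (e : Fin r → Expo n q)

lemma inShift_iff_le {e v : Expo n q} : inShift e v ↔ e.1 ≤ v.1 ∧ e.2 ≤ v.2 := by
  constructor
  · rintro ⟨γ, rfl⟩
    exact ⟨self_le_add_right _ _, self_le_add_right _ _⟩
  · rintro ⟨h1, h2⟩
    refine ⟨(v.1 - e.1, v.2 - e.2), ?_⟩
    have h1' := Finsupp.le_def.mp h1
    have h2' := Finsupp.le_def.mp h2
    ext i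
    · simp only [Prod.fst_add, Finsupp.add_apply, Finsupp.tsub_apply]
      have := h1' i; omega
    · simp only [Prod.snd_add, Finsupp.add_apply, Finsupp.tsub_apply]
      have := h2' i; omega

lemma deltaJ_unique {v : Expo n q} {j k : Fin r} (hj : v ∈ DeltaJ e j) (hk : v ∈ DeltaJ e k) :
    j = k := by
  rcases lt_trichotomy j k with h | h | h
  · exact absurd hj.1 (hk.2 j h)
  · exact h
  · exact absurd hk.1 (hj.2 k h)

lemma deltaJ_not_bar {v : Expo n q} {j : Fin r} (hj : v ∈ DeltaJ e j) : v ∉ DeltaBar e :=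
  fun hb => hb j hj.1

lemma exists_deltaJ {v : Expo n q} {j : Fin r} (h : inShift (e j) v) :
    ∃ k, v ∈ DeltaJ e k := by
  classical
  have hne : (Finset.univ.filter (fun k => inShift (e k) v)).Nonempty :=
    ⟨j, by simp [h]⟩
  set j0 := (Finset.univ.filter (fun k => inShift (e k) v)).min' hne with hj0
  refine ⟨j0, ?_, ?_⟩
  · have := Finset.min'_mem _ hne
    rw [Finset.mem_filter] at this
    exact this.2
  · intro k hk hsh
    have : j0 ≤ k := Finset.min'_le _ _ (by simp [hsh])
    exact absurd hk (not_lt.mpr this)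

end DeltaLemmas


section DivDef
variable {n q r : ℕ}

/-- One step of the division recursion. -/
def divStep (l : Fin q → ℕ) (lt0 : Expo n q → Expo n q → Prop)
    (hadd : ∀ a b c : Expo n q, lt0 a b → lt0 (a + c) (b + c))
    (e : Fin r → Expo n q) {K : Type} [Field K]
    (a : Fin r → Expo n q → K) (cK : Fin r → K) (Fc : Expo n q → K) (M Bp : ℕ) :
    ∀ (v : Expo n q), (∀ w, RRel l lt0 M Bp w v → K) → K := fun v rec =>
  if hv : psiW l M v.2 ≤ Bp then
    (if hj : ∃ j, v ∈ DeltaJ e j then (cK hj.choose)⁻¹ else 1) *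
    (Fc v - ∑ j : Fin r, ∑ bp ∈ Finset.HasAntidiagonal.antidiagonal v.2, ∑ ap ∈ Finset.HasAntidiagonal.antidiagonal v.1,
      (if hg : PrecL l lt0 (ap.2, bp.2) (e j) ∧
          (e j + ((ap.1, bp.1) : Expo n q)) ∈ DeltaJ e j ∧
          psiW l M (e j + ((ap.1, bp.1) : Expo n q)).2 ≤ Bp ∧
          ap.1 + ap.2 = v.1 ∧ bp.1 + bp.2 = v.2
       then rec (e j + ((ap.1, bp.1) : Expo n q))
          ⟨hg.2.2.1, hv, by
            obtain ⟨h1, h2, h3, h4, h5⟩ := hg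
            have hp := prec_add l lt0 h1 hadd ((ap.1, bp.1) : Expo n q)
            have hv' : ((ap.2, bp.2) : Expo n q) + ((ap.1, bp.1) : Expo n q) = v := by
              have ha' : ap.2 + ap.1 = v.1 := by rw [add_comm]; exact h4
              have hb' : bp.2 + bp.1 = v.2 := by rw [add_comm]; exact h5
              exact Prod.ext ha' hb'
            rw [hv'] at hp
            exact hp⟩
       else 0) * a j (ap.2, bp.2))
  else 0

/-- The coefficient function of the division, by well-founded recursion. -/
def divF (l : Fin q → ℕ) (lt0 : Expo n q → Expo n q → Prop)
    (hadd : ∀ a b c : Expo n q, lt0 a b → lt0 (a + c) (b + c))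
    (e : Fin r → Expo n q) {K : Type} [Field K]
    (a : Fin r → Expo n q → K) (cK : Fin r → K) (Fc : Expo n q → K) (M Bp : ℕ)
    (hM : 1 ≤ M) (hwf : WellFounded lt0) : Expo n q → K :=
  (RRel_wf l lt0 M Bp hM hwf).fix (divStep l lt0 hadd e a cK Fc M Bp)

variable (l : Fin q → ℕ) (lt0 : Expo n q → Expo n q → Prop)
  (hadd : ∀ a b c : Expo n q, lt0 a b → lt0 (a + c) (b + c))
  (e : Fin r → Expo n q) {K : Type} [Field K]
  (a : Fin r → Expo n q → K) (cK : Fin r → K) (Fc : Expo n q → K) (M Bp : ℕ)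
  (hM : 1 ≤ M) (hwf : WellFounded lt0)

lemma divF_eq (v : Expo n q) :
    divF l lt0 hadd e a cK Fc M Bp hM hwf v
      = divStep l lt0 hadd e a cK Fc M Bp v
          (fun w _ => divF l lt0 hadd e a cK Fc M Bp hM hwf w) :=
  WellFounded.fix_eq _ _ _

lemma divF_zero_of_psi {v : Expo n q} (hv : ¬ psiW l M v.2 ≤ Bp) :
    divF l lt0 hadd e a cK Fc M Bp hM hwf v = 0 := by
  rw [divF_eq, divStep, dif_neg hv]

end DivDef

lemma pair_eq {A B : Type*} {x : A} {y : B} {z : A × B} (h1 : x = z.1) (h2 : y = z.2) :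
    (x, y) = z := by
  cases z
  simp only [Prod.mk.injEq]
  exact ⟨h1, h2⟩

section ADLemmas
variable {M : Type} [AddCommMonoid M]

lemma sum_AD_single {σ : Type} [DecidableEq σ] (t s : σ →₀ ℕ) (f : (σ →₀ ℕ) → M) :
    ∑ p ∈ Finset.HasAntidiagonal.antidiagonal t, (if p.2 = s then f p.1 else 0)
      = if s ≤ t then f (t - s) else 0 := by
  classical
  by_cases h : s ≤ t
  · rw [if_pos h, Finset.sum_eq_single_of_mem ((t - s, s) : (σ →₀ ℕ) × (σ →₀ ℕ))]
    · simp
    · rw [Finset.HasAntidiagonal.mem_antidiagonal]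
      exact tsub_add_cancel_of_le h
    · rintro ⟨b1, b2⟩ hb hne
      rw [Finset.HasAntidiagonal.mem_antidiagonal] at hb
      by_cases h2 : b2 = s
      · exfalso
        apply hne
        subst h2
        have : b1 = t - b2 := eq_tsub_of_add_eq hb
        rw [this]
      · rw [if_neg h2]
  · rw [if_neg h, Finset.sum_eq_zero]
    rintro ⟨b1, b2⟩ hb
    rw [Finset.HasAntidiagonal.mem_antidiagonal] at hb
    rw [if_neg]
    rintro rfl
    exact h (hb ▸ le_add_self)

lemma sum_AD2 {n q : ℕ} (v ee : Expo n q) (f : Expo n q → M) :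
    ∑ bp ∈ Finset.HasAntidiagonal.antidiagonal v.2, ∑ ap ∈ Finset.HasAntidiagonal.antidiagonal v.1,
        (if ((ap.2, bp.2) : Expo n q) = ee then f (ap.1, bp.1) else 0)
      = if ee.1 ≤ v.1 ∧ ee.2 ≤ v.2 then f (v.1 - ee.1, v.2 - ee.2) else 0 := by
  have inner : ∀ bp : (Fin q →₀ ℕ) × (Fin q →₀ ℕ),
      ∑ ap ∈ Finset.HasAntidiagonal.antidiagonal v.1,
          (if ((ap.2, bp.2) : Expo n q) = ee then f (ap.1, bp.1) else 0)
        = if bp.2 = ee.2 then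
            (if ee.1 ≤ v.1 then f (v.1 - ee.1, bp.1) else 0) else 0 := by
    intro bp
    by_cases hb : bp.2 = ee.2
    · rw [if_pos hb]
      have hcong : ∀ ap ∈ Finset.HasAntidiagonal.antidiagonal v.1,
          (if ((ap.2, bp.2) : Expo n q) = ee then f (ap.1, bp.1) else 0)
            = (if ap.2 = ee.1 then f (ap.1, bp.1) else 0) := by
        intro ap _
        by_cases h : ap.2 = ee.1
        · rw [if_pos (pair_eq h hb), if_pos h]
        · rw [if_neg (fun hc => h (congrArg Prod.fst hc)), if_neg h]
      exact (Finset.sum_congr rfl hcong).trans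
        (sum_AD_single v.1 ee.1 (fun a1 => f (a1, bp.1)))
    · rw [if_neg hb, Finset.sum_eq_zero]
      intro ap _
      rw [if_neg]
      intro hc
      rw [Prod.ext_iff] at hc
      exact hb hc.2
  refine (Finset.sum_congr rfl (fun bp _ => inner bp)).trans ?_
  refine (sum_AD_single v.2 ee.2 (fun b1 => if ee.1 ≤ v.1 then f (v.1 - ee.1, b1) else 0)).trans ?_
  by_cases h2 : ee.2 ≤ v.2 <;> by_cases h1 : ee.1 ≤ v.1 <;>
    simp [h1, h2]
end ADLemmas

section DivMain
variable {n q r : ℕ} (l : Fin q → ℕ) (lt0 : Expo n q → Expo n q → Prop)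
  (hadd : ∀ a b c : Expo n q, lt0 a b → lt0 (a + c) (b + c))
  (e : Fin r → Expo n q) {K : Type} [Field K]
  (a : Fin r → Expo n q → K) (cK : Fin r → K) (Fc : Expo n q → K) (M Bp : ℕ)
  (hM : 1 ≤ M) (hwf : WellFounded lt0)

lemma RRel_of_guard (hadd' : ∀ a b c : Expo n q, lt0 a b → lt0 (a + c) (b + c))
    {v : Expo n q} {j : Fin r}
    {ap : (Fin n →₀ ℕ) × (Fin n →₀ ℕ)} {bp : (Fin q →₀ ℕ) × (Fin q →₀ ℕ)}
    (hv : psiW l M v.2 ≤ Bp) (h1 : PrecL l lt0 (ap.2, bp.2) (e j))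
    (h3 : psiW l M (e j + ((ap.1, bp.1) : Expo n q)).2 ≤ Bp)
    (h4 : ap.1 + ap.2 = v.1) (h5 : bp.1 + bp.2 = v.2) :
    RRel l lt0 M Bp (e j + ((ap.1, bp.1) : Expo n q)) v := by
  refine ⟨h3, hv, ?_⟩
  have hp := prec_add l lt0 h1 hadd' ((ap.1, bp.1) : Expo n q)
  have hv' : ((ap.2, bp.2) : Expo n q) + ((ap.1, bp.1) : Expo n q) = v := by
    have ha' : ap.2 + ap.1 = v.1 := by rw [add_comm]; exact h4
    have hb' : bp.2 + bp.1 = v.2 := by rw [add_comm]; exact h5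
    exact Prod.ext ha' hb'
  rw [hv'] at hp
  exact hp

/-- The inner sum of the division step, with `divF` substituted. -/
def SdivF (v : Expo n q) : K :=
  ∑ j : Fin r, ∑ bp ∈ Finset.HasAntidiagonal.antidiagonal v.2, ∑ ap ∈ Finset.HasAntidiagonal.antidiagonal v.1,
    (if PrecL l lt0 (ap.2, bp.2) (e j) ∧
        (e j + ((ap.1, bp.1) : Expo n q)) ∈ DeltaJ e j ∧
        psiW l M (e j + ((ap.1, bp.1) : Expo n q)).2 ≤ Bp ∧
        ap.1 + ap.2 = v.1 ∧ bp.1 + bp.2 = v.2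
     then divF l lt0 hadd e a cK Fc M Bp hM hwf (e j + ((ap.1, bp.1) : Expo n q))
     else 0) * a j (ap.2, bp.2)

lemma divF_eq2 (v : Expo n q) :
    divF l lt0 hadd e a cK Fc M Bp hM hwf v
      = if psiW l M v.2 ≤ Bp then
          (if hj : ∃ j, v ∈ DeltaJ e j then (cK hj.choose)⁻¹ else 1) *
          (Fc v - SdivF l lt0 hadd e a cK Fc M Bp hM hwf v)
        else 0 := by
  rw [divF_eq, divStep]
  split
  · congr 2
  · rfl

/-- Quotient coefficients. -/
def QcF (j : Fin r) (γ : Expo n q) : K :=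
  if e j + γ ∈ DeltaJ e j then divF l lt0 hadd e a cK Fc M Bp hM hwf (e j + γ) else 0

/-- Remainder coefficients. -/
def rhoF (v : Expo n q) : K :=
  if v ∈ DeltaBar e then divF l lt0 hadd e a cK Fc M Bp hM hwf v else 0

/-- Truncated divisor coefficients. -/
def pcF (j : Fin r) (δ : Expo n q) : K :=
  if δ = e j ∨ PrecL l lt0 δ (e j) then a j δ else 0


lemma SdivF_zero
    (hamono : ∀ j δ, a j δ ≠ 0 → PrecL l lt0 δ (e j) → psiW l M δ.2 ≤ psiW l M (e j).2)
    {v : Expo n q} (hv : ¬ psiW l M v.2 ≤ Bp) :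
    SdivF l lt0 hadd e a cK Fc M Bp hM hwf v = 0 := by
  rw [SdivF]
  refine Finset.sum_eq_zero fun j _ => Finset.sum_eq_zero fun bp hbp =>
    Finset.sum_eq_zero fun ap hap => ?_
  by_cases ha0 : a j (ap.2, bp.2) = 0
  · rw [ha0, mul_zero]
  rw [if_neg, zero_mul]
  rintro ⟨h1, h2, h3, h4, h5⟩
  apply hv
  have hv2 : psiW l M v.2 = psiW l M bp.1 + psiW l M bp.2 := by rw [← h5, psiW_add]
  have hm := hamono j (ap.2, bp.2) ha0 h1
  have hw2 : psiW l M (e j + ((ap.1, bp.1) : Expo n q)).2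
      = psiW l M (e j).2 + psiW l M bp.1 := by
    show psiW l M ((e j).2 + bp.1) = _
    rw [psiW_add, add_comm]
  have hm' : psiW l M bp.2 ≤ psiW l M (e j).2 := hm
  omega

theorem divF_identity
    (hcK : ∀ j, cK j = a j (e j)) (hcK0 : ∀ j, cK j ≠ 0)
    (hamono : ∀ j δ, a j δ ≠ 0 → PrecL l lt0 δ (e j) → psiW l M δ.2 ≤ psiW l M (e j).2)
    (hFc : ∀ v, ¬ psiW l M v.2 ≤ Bp → Fc v = 0)
    (v : Expo n q) :
    (∑ j : Fin r, ∑ bp ∈ Finset.HasAntidiagonal.antidiagonal v.2, ∑ ap ∈ Finset.HasAntidiagonal.antidiagonal v.1,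
        QcF l lt0 hadd e a cK Fc M Bp hM hwf j (ap.1, bp.1)
          * pcF l lt0 e a j (ap.2, bp.2))
      + rhoF l lt0 hadd e a cK Fc M Bp hM hwf v = Fc v := by
  have hsplit : ∀ j : Fin r, ∀ bp ∈ Finset.HasAntidiagonal.antidiagonal v.2, ∀ ap ∈ Finset.HasAntidiagonal.antidiagonal v.1,
      QcF l lt0 hadd e a cK Fc M Bp hM hwf j (ap.1, bp.1) * pcF l lt0 e a j (ap.2, bp.2)
        = (if ((ap.2, bp.2) : Expo n q) = e j
            then QcF l lt0 hadd e a cK Fc M Bp hM hwf j (ap.1, bp.1) * cK j else 0)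
          + (if PrecL l lt0 (ap.2, bp.2) (e j) ∧
              (e j + ((ap.1, bp.1) : Expo n q)) ∈ DeltaJ e j ∧
              psiW l M (e j + ((ap.1, bp.1) : Expo n q)).2 ≤ Bp ∧
              ap.1 + ap.2 = v.1 ∧ bp.1 + bp.2 = v.2
             then divF l lt0 hadd e a cK Fc M Bp hM hwf (e j + ((ap.1, bp.1) : Expo n q))
             else 0) * a j (ap.2, bp.2) := by
    intro j bp hbp ap hap
    rw [Finset.HasAntidiagonal.mem_antidiagonal] at hbp hap
    by_cases hd : ((ap.2, bp.2) : Expo n q) = e j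
    · have h2 : pcF l lt0 e a j (ap.2, bp.2) = cK j := by
        rw [pcF, if_pos (Or.inl hd), hd, ← hcK j]
      rw [h2, if_pos hd,
        if_neg (fun hg => absurd hg.1 (by rw [hd]; exact prec_irrefl l lt0 hwf (e j))),
        zero_mul, add_zero]
    · rw [if_neg hd, zero_add]
      by_cases hp : PrecL l lt0 (ap.2, bp.2) (e j)
      · have h2 : pcF l lt0 e a j (ap.2, bp.2) = a j (ap.2, bp.2) := by
          rw [pcF, if_pos (Or.inr hp)]
        rw [h2, QcF]
        by_cases hw : (e j + ((ap.1, bp.1) : Expo n q)) ∈ DeltaJ e j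
        · by_cases hpsi : psiW l M (e j + ((ap.1, bp.1) : Expo n q)).2 ≤ Bp
          · rw [if_pos hw, if_pos ⟨hp, hw, hpsi, hap, hbp⟩]
          · rw [if_pos hw, if_neg (fun hg => hpsi hg.2.2.1),
              divF_zero_of_psi l lt0 hadd e a cK Fc M Bp hM hwf hpsi]
        · rw [if_neg hw, if_neg (fun hg => hw hg.2.1)]
      · have h2 : pcF l lt0 e a j (ap.2, bp.2) = 0 := by
          rw [pcF, if_neg]
          rintro (h | h)
          exacts [hd h, hp h]
        rw [h2, mul_zero, if_neg (fun hg => hp hg.1), zero_mul]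
  have hLHS : (∑ j : Fin r, ∑ bp ∈ Finset.HasAntidiagonal.antidiagonal v.2, ∑ ap ∈ Finset.HasAntidiagonal.antidiagonal v.1,
        QcF l lt0 hadd e a cK Fc M Bp hM hwf j (ap.1, bp.1) * pcF l lt0 e a j (ap.2, bp.2))
      = (∑ j : Fin r,
          if (e j).1 ≤ v.1 ∧ (e j).2 ≤ v.2
          then QcF l lt0 hadd e a cK Fc M Bp hM hwf j (v.1 - (e j).1, v.2 - (e j).2) * cK j
          else 0)
        + SdivF l lt0 hadd e a cK Fc M Bp hM hwf v := by
    rw [SdivF, ← Finset.sum_add_distrib]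
    refine Finset.sum_congr rfl fun j _ => ?_
    rw [← sum_AD2 v (e j) (fun γ => QcF l lt0 hadd e a cK Fc M Bp hM hwf j γ * cK j),
      ← Finset.sum_add_distrib]
    refine Finset.sum_congr rfl fun bp hbp => ?_
    rw [← Finset.sum_add_distrib]
    exact Finset.sum_congr rfl fun ap hap => hsplit j bp hbp ap hap
  rw [hLHS]
  by_cases hex : ∃ j0, v ∈ DeltaJ e j0
  · obtain ⟨j0, hj0⟩ := hex
    have hle := inShift_iff_le.mp hj0.1
    have hvs : e j0 + ((v.1 - (e j0).1, v.2 - (e j0).2) : Expo n q) = v := by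
      refine pair_eq ?_ ?_
      · exact add_tsub_cancel_of_le hle.1
      · exact add_tsub_cancel_of_le hle.2
    have hlead : (∑ j : Fin r,
          if (e j).1 ≤ v.1 ∧ (e j).2 ≤ v.2
          then QcF l lt0 hadd e a cK Fc M Bp hM hwf j (v.1 - (e j).1, v.2 - (e j).2) * cK j
          else 0)
        = divF l lt0 hadd e a cK Fc M Bp hM hwf v * cK j0 := by
      rw [Finset.sum_eq_single_of_mem j0 (Finset.mem_univ j0)]
      · rw [if_pos ⟨hle.1, hle.2⟩, QcF, hvs, if_pos hj0]
      · intro j _ hne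
        by_cases hlej : (e j).1 ≤ v.1 ∧ (e j).2 ≤ v.2
        · have hvsj : e j + ((v.1 - (e j).1, v.2 - (e j).2) : Expo n q) = v := by
            refine pair_eq ?_ ?_
            · exact add_tsub_cancel_of_le hlej.1
            · exact add_tsub_cancel_of_le hlej.2
          rw [if_pos hlej, QcF, hvsj,
            if_neg (fun hw => hne (deltaJ_unique e hw hj0)), zero_mul]
        · rw [if_neg hlej]
    rw [hlead, rhoF, if_neg (deltaJ_not_bar e hj0), add_zero]
    by_cases hpsi : psiW l M v.2 ≤ Bp
    · rw [divF_eq2, if_pos hpsi, dif_pos (⟨j0, hj0⟩ : ∃ j, v ∈ DeltaJ e j)]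
      have hch : (⟨j0, hj0⟩ : ∃ j, v ∈ DeltaJ e j).choose = j0 :=
        deltaJ_unique e (Exists.choose_spec (⟨j0, hj0⟩ : ∃ j, v ∈ DeltaJ e j)) hj0
      rw [hch, mul_comm ((cK j0)⁻¹) _, mul_assoc, inv_mul_cancel₀ (hcK0 j0), mul_one]
      ring
    · rw [divF_zero_of_psi l lt0 hadd e a cK Fc M Bp hM hwf hpsi,
        SdivF_zero l lt0 hadd e a cK Fc M Bp hM hwf hamono hpsi, hFc v hpsi]
      ring
  · have hbar : v ∈ DeltaBar e := by
      intro j hsh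
      exact hex (exists_deltaJ e hsh)
    have hlead : (∑ j : Fin r,
          if (e j).1 ≤ v.1 ∧ (e j).2 ≤ v.2
          then QcF l lt0 hadd e a cK Fc M Bp hM hwf j (v.1 - (e j).1, v.2 - (e j).2) * cK j
          else 0) = 0 := by
      refine Finset.sum_eq_zero fun j _ => ?_
      by_cases hlej : (e j).1 ≤ v.1 ∧ (e j).2 ≤ v.2
      · have hvsj : e j + ((v.1 - (e j).1, v.2 - (e j).2) : Expo n q) = v := by
          refine pair_eq ?_ ?_
          · exact add_tsub_cancel_of_le hlej.1
          · exact add_tsub_cancel_of_le hlej.2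
        rw [if_pos hlej, QcF, hvsj, if_neg (fun hw => hbar j hw.1), zero_mul]
      · rw [if_neg hlej]
    rw [hlead, rhoF, if_pos hbar, zero_add]
    by_cases hpsi : psiW l M v.2 ≤ Bp
    · rw [divF_eq2, if_pos hpsi, dif_neg hex, one_mul]
      ring
    · rw [divF_zero_of_psi l lt0 hadd e a cK Fc M Bp hM hwf hpsi,
        SdivF_zero l lt0 hadd e a cK Fc M Bp hM hwf hamono hpsi, hFc v hpsi]
      ring

lemma divF_mem (G : K → Prop) (hG0 : G 0) (hG1 : G 1)
    (hGadd : ∀ x y, G x → G y → G (x + y)) (hGsub : ∀ x y, G x → G y → G (x - y))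
    (hGmul : ∀ x y, G x → G y → G (x * y))
    (hGa : ∀ j δ, G (a j δ)) (hGFc : ∀ v, G (Fc v)) (hGinv : ∀ j, G ((cK j)⁻¹)) :
    ∀ v, G (divF l lt0 hadd e a cK Fc M Bp hM hwf v) := by
  intro v
  refine (RRel_wf l lt0 M Bp hM hwf).induction
    (C := fun v => G (divF l lt0 hadd e a cK Fc M Bp hM hwf v)) v fun v IH => ?_
  show G (divF l lt0 hadd e a cK Fc M Bp hM hwf v)
  rw [divF_eq2]
  split
  · next hv =>
    apply hGmul
    · split
      · exact hGinv _
      · exact hG1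
    · apply hGsub _ _ (hGFc v)
      rw [SdivF]
      refine Finset.sum_induction _ G hGadd hG0 (fun j _ => ?_)
      refine Finset.sum_induction _ G hGadd hG0 (fun bp _ => ?_)
      refine Finset.sum_induction _ G hGadd hG0 (fun ap _ => ?_)
      refine hGmul _ _ ?_ (hGa j (ap.2, bp.2))
      split
      · next hg =>
        exact IH _ (RRel_of_guard l lt0 e M Bp hadd hv hg.1 hg.2.2.1 hg.2.2.2.1 hg.2.2.2.2)
      · exact hG0
  · exact hG0

end DivMain


section LocLemmas
variable {C : Type} [CommRing C] (h : C) (Q : Ideal C)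

lemma inLoc_zero : inLoc h (0 : FractionRing C) := ⟨0, 0, by simp⟩

lemma inLoc_one : inLoc h (1 : FractionRing C) := ⟨1, 0, by simp⟩

lemma inLoc_alg (c : C) : inLoc h (algebraMap C (FractionRing C) c) := ⟨c, 0, by simp⟩

lemma inLoc_add {x y : FractionRing C} (hx : inLoc h x) (hy : inLoc h y) :
    inLoc h (x + y) := by
  obtain ⟨c, m, hc⟩ := hx; obtain ⟨d, k, hd⟩ := hy
  refine ⟨c * h ^ k + d * h ^ m, m + k, ?_⟩
  rw [map_add, map_mul, map_mul, map_pow, map_pow, ← hc, ← hd, pow_add]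
  ring

lemma inLoc_sub {x y : FractionRing C} (hx : inLoc h x) (hy : inLoc h y) :
    inLoc h (x - y) := by
  obtain ⟨c, m, hc⟩ := hx; obtain ⟨d, k, hd⟩ := hy
  refine ⟨c * h ^ k - d * h ^ m, m + k, ?_⟩
  rw [map_sub, map_mul, map_mul, map_pow, map_pow, ← hc, ← hd, pow_add]
  ring

lemma inLoc_mul {x y : FractionRing C} (hx : inLoc h x) (hy : inLoc h y) :
    inLoc h (x * y) := by
  obtain ⟨c, m, hc⟩ := hx; obtain ⟨d, k, hd⟩ := hy
  refine ⟨c * d, m + k, ?_⟩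
  rw [map_mul, ← hc, ← hd, pow_add]
  ring

lemma inLoc_sum {ι : Type*} (s : Finset ι) (f : ι → FractionRing C)
    (hf : ∀ i ∈ s, inLoc h (f i)) : inLoc h (∑ i ∈ s, f i) :=
  Finset.sum_induction f _ (fun _ _ ha hb => inLoc_add h ha hb) (inLoc_zero h) hf

lemma inLocIdeal_zero : inLocIdeal h Q (0 : FractionRing C) := ⟨0, Q.zero_mem, 0, by simp⟩

lemma inLocIdeal_add {x y : FractionRing C} (hx : inLocIdeal h Q x) (hy : inLocIdeal h Q y) :
    inLocIdeal h Q (x + y) := by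
  obtain ⟨c, hcQ, m, hc⟩ := hx; obtain ⟨d, hdQ, k, hd⟩ := hy
  refine ⟨c * h ^ k + d * h ^ m, Q.add_mem (Q.mul_mem_right _ hcQ) (Q.mul_mem_right _ hdQ),
    m + k, ?_⟩
  rw [map_add, map_mul, map_mul, map_pow, map_pow, ← hc, ← hd, pow_add]
  ring

lemma inLocIdeal_sub {x y : FractionRing C} (hx : inLocIdeal h Q x) (hy : inLocIdeal h Q y) :
    inLocIdeal h Q (x - y) := by
  obtain ⟨c, hcQ, m, hc⟩ := hx; obtain ⟨d, hdQ, k, hd⟩ := hy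
  refine ⟨c * h ^ k - d * h ^ m, Q.sub_mem (Q.mul_mem_right _ hcQ) (Q.mul_mem_right _ hdQ),
    m + k, ?_⟩
  rw [map_sub, map_mul, map_mul, map_pow, map_pow, ← hc, ← hd, pow_add]
  ring

lemma inLocIdeal_neg {x : FractionRing C} (hx : inLocIdeal h Q x) : inLocIdeal h Q (-x) := by
  have := inLocIdeal_sub h Q (inLocIdeal_zero h Q) hx
  rwa [zero_sub] at this

lemma inLocIdeal_mul_loc {x y : FractionRing C} (hx : inLoc h x) (hy : inLocIdeal h Q y) :
    inLocIdeal h Q (x * y) := by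
  obtain ⟨c, m, hc⟩ := hx; obtain ⟨d, hdQ, k, hd⟩ := hy
  refine ⟨c * d, Q.mul_mem_left _ hdQ, m + k, ?_⟩
  rw [map_mul, ← hc, ← hd, pow_add]
  ring

lemma inLocIdeal_alg {c : C} (hc : c ∈ Q) :
    inLocIdeal h Q (algebraMap C (FractionRing C) c) := ⟨c, hc, 0, by simp⟩

lemma inLocIdeal_inLoc {x : FractionRing C} (hx : inLocIdeal h Q x) : inLoc h x := by
  obtain ⟨c, _, m, hc⟩ := hx
  exact ⟨c, m, hc⟩

lemma inLocIdeal_sum {ι : Type*} (s : Finset ι) (f : ι → FractionRing C)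
    (hf : ∀ i ∈ s, inLocIdeal h Q (f i)) : inLocIdeal h Q (∑ i ∈ s, f i) :=
  Finset.sum_induction f _ (fun _ _ ha hb => inLocIdeal_add h Q ha hb) (inLocIdeal_zero h Q) hf

lemma inLoc_inv [IsDomain C] {cj g : C} (hg : h = cj * g)
    (hcj : algebraMap C (FractionRing C) cj ≠ 0) :
    inLoc h ((algebraMap C (FractionRing C) cj)⁻¹) := by
  refine ⟨g, 1, ?_⟩
  rw [pow_one, hg, map_mul]
  field_simp

lemma inLocIdeal_cancel {cj g : C} (hg : h = cj * g) {x : FractionRing C}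
    (hx : inLocIdeal h Q (x * algebraMap C (FractionRing C) cj)) : inLocIdeal h Q x := by
  obtain ⟨c, hcQ, m, hm⟩ := hx
  refine ⟨c * g, Q.mul_mem_right g hcQ, m + 1, ?_⟩
  calc x * algebraMap C (FractionRing C) h ^ (m + 1)
      = (x * algebraMap C (FractionRing C) cj * algebraMap C (FractionRing C) h ^ m)
        * algebraMap C (FractionRing C) g := by
        rw [pow_succ, hg, map_mul]; ring
    _ = algebraMap C (FractionRing C) c * algebraMap C (FractionRing C) g := by rw [hm]
    _ = algebraMap C (FractionRing C) (c * g) := (map_mul _ _ _).symm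

end LocLemmas

section SpecLemmas
variable {n q : ℕ} {C : Type} [CommRing C]

lemma coeffOf_specHom (Q : Ideal C) (P : Rxz n q C) (d : Expo n q) :
    coeffOf (specHom Q P) d
      = ((algebraMap (C ⧸ Q) (FractionRing (C ⧸ Q))).comp (Ideal.Quotient.mk Q))
          (coeffOf P d) := by
  rw [specHom]
  exact coeffOf_map _ P d

lemma coeffOf_toFracHom (P : Rxz n q C) (d : Expo n q) :
    coeffOf (toFracHom P) d = algebraMap C (FractionRing C) (coeffOf P d) := by
  rw [toFracHom]
  exact coeffOf_map _ P d

lemma spec_zero_iff [IsDomain C] {Q : Ideal C} (hQ : Q.IsPrime) (c : C) :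
    ((algebraMap (C ⧸ Q) (FractionRing (C ⧸ Q))).comp (Ideal.Quotient.mk Q)) c = 0
      ↔ c ∈ Q := by
  haveI := hQ
  rw [RingHom.comp_apply,
    map_eq_zero_iff _ (IsFractionRing.injective (C ⧸ Q) (FractionRing (C ⧸ Q)))]
  exact Ideal.Quotient.eq_zero_iff_mem

end SpecLemmas

section MiscLemmas

lemma degSum_apply_le {σ : Type} [Fintype σ] (β : σ →₀ ℕ) (i : σ) : β i ≤ degSum β :=
  Finset.single_le_sum (f := fun i => β i) (fun _ _ => Nat.zero_le _) (Finset.mem_univ i)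

lemma degSum_eq_finsupp_sum {σ : Type} [Fintype σ] (β : σ →₀ ℕ) :
    (β.sum fun _ e => e) = degSum β :=
  Finsupp.sum_fintype _ _ (fun _ => rfl)

end MiscLemmas


section Uniqueness

lemma division_unique
    {n q r : ℕ} {C : Type} [CommRing C] [IsDomain C]
    (Q : Ideal C) (hQ : Q.IsPrime)
    (l : Fin q → ℕ) (lt0 : Expo n q → Expo n q → Prop)
    (hlt0_wf : WellFounded lt0)
    (hlt0_add : ∀ a b c : Expo n q, lt0 a b → lt0 (a + c) (b + c))
    (P : Fin r → Rxz n q C) (e : Fin r → Expo n q)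
    (he2 : ∀ j δ, ¬(δ = e j ∨ PrecL l lt0 δ (e j)) → coeffOf (P j) δ ∈ Q)
    (h : C) (hdvd : ∀ j, ∃ g, h = coeffOf (P j) (e j) * g)
    (F : Rxz n q C)
    (Qs Qs' : Fin r → Rxz n q (FractionRing C)) (R R' T T' : Rxz n q (FractionRing C))
    (hsol : IsDivModQ Q h P e F Qs R T) (hsol' : IsDivModQ Q h P e F Qs' R' T') :
    (∀ j d, inLocIdeal h Q (coeffOf (Qs j - Qs' j) d)) ∧
    (∀ d, inLocIdeal h Q (coeffOf (R - R') d)) := by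
  classical
  set K := FractionRing C with hK
  set ι : C →+* K := (algebraMap C (FractionRing C) : C →+* K) with hι
  -- the element-level equation for the differences
  have hel : (∑ j, (Qs j - Qs' j) * toFracHom (P j)) + (R - R') + (T - T') = 0 := by
    have h1 := hsol.1
    have h2 := hsol'.1
    have h12 : (∑ j, Qs j * toFracHom (P j)) + R + T
        = (∑ j, Qs' j * toFracHom (P j)) + R' + T' := h1.symm.trans h2
    have hexp : (∑ j, (Qs j - Qs' j) * toFracHom (P j))
        = (∑ j, Qs j * toFracHom (P j)) - (∑ j, Qs' j * toFracHom (P j)) := by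
      rw [← Finset.sum_sub_distrib]
      exact Finset.sum_congr rfl fun j _ => sub_mul _ _ _
    rw [hexp]
    rw [sub_add_sub_comm, sub_add_sub_comm]
    rw [h12]
    exact sub_self _
  -- the coefficientwise equation
  have heq : ∀ v : Expo n q,
      (∑ j : Fin r, ∑ bp ∈ Finset.HasAntidiagonal.antidiagonal v.2, ∑ ap ∈ Finset.HasAntidiagonal.antidiagonal v.1,
          coeffOf (Qs j - Qs' j) (ap.1, bp.1) * ι (coeffOf (P j) (ap.2, bp.2)))
        + coeffOf (R - R') v + coeffOf (T - T') v = 0 := by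
    intro v
    have hc := congrArg (fun X => coeffOf X v) hel
    simp only [coeffOf_zero] at hc
    rw [coeffOf_add, coeffOf_add, coeffOf_sum] at hc
    rw [← hc]
    congr 1
    congr 1
    refine Finset.sum_congr rfl fun j _ => ?_
    rw [coeffOf_mul]
    refine Finset.sum_congr rfl fun bp _ => Finset.sum_congr rfl fun ap _ => ?_
    rw [coeffOf_toFracHom]
  -- vanishing of difference coefficients outside the regions
  have hDside : ∀ j (γ : Expo n q), ¬ (e j + γ ∈ DeltaJ e j) →
      coeffOf (Qs j - Qs' j) γ = 0 := by
    have haux : ∀ (Z : Fin r → Rxz n q K),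
        (∀ j, Z j = 0 ∨ ∀ d ∈ newtonDiag (Z j), d + e j ∈ DeltaJ e j) →
        ∀ j (γ : Expo n q), ¬ (e j + γ ∈ DeltaJ e j) → coeffOf (Z j) γ = 0 := by
      intro Z hZ j γ hnot
      rcases hZ j with h0 | hdn
      · rw [h0, coeffOf_zero]
      · by_contra hne
        apply hnot
        have := hdn γ hne
        rwa [add_comm] at this
    intro j γ hnot
    rw [coeffOf_sub, haux Qs hsol.2.2.2.2.2.1 j γ hnot,
      haux Qs' hsol'.2.2.2.2.2.1 j γ hnot, sub_self]
  have hRside : ∀ v : Expo n q, v ∉ DeltaBar e → coeffOf (R - R') v = 0 := by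
    have haux : ∀ (Z : Rxz n q K), (Z = 0 ∨ newtonDiag Z ⊆ DeltaBar e) →
        ∀ v : Expo n q, v ∉ DeltaBar e → coeffOf Z v = 0 := by
      intro Z hZ v hnot
      rcases hZ with h0 | hdn
      · rw [h0, coeffOf_zero]
      · by_contra hne
        exact hnot (hdn hne)
    intro v hnot
    rw [coeffOf_sub, haux R hsol.2.2.2.2.2.2 v hnot, haux R' hsol'.2.2.2.2.2.2 v hnot,
      sub_self]
  -- support bound
  set Bu : ℕ := (Finset.univ.sup fun j : Fin r =>
      (((Qs j).support ∪ (Qs' j).support).sup fun β => psiW l 1 (β + (e j).2)))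
    ⊔ ((R.support ∪ R'.support).sup fun β => psiW l 1 β) with hBu
  have hdq_psi : ∀ j (γ : Expo n q), coeffOf (Qs j - Qs' j) γ ≠ 0 →
      psiW l 1 ((e j + γ).2) ≤ Bu := by
    intro j γ hne
    have hsup : γ.2 ∈ (Qs j).support ∪ (Qs' j).support := by
      rw [coeffOf_sub, sub_ne_zero] at hne
      rcases ne_or_eq (coeffOf (Qs j) γ) 0 with h1 | h1
      · exact Finset.mem_union_left _ (coeffOf_ne_zero_mem_support _ _ h1)
      · rw [h1] at hne
        exact Finset.mem_union_right _ (coeffOf_ne_zero_mem_support _ _ (Ne.symm hne))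
    have h1 : psiW l 1 (γ.2 + (e j).2)
        ≤ (((Qs j).support ∪ (Qs' j).support).sup fun β => psiW l 1 (β + (e j).2)) :=
      Finset.le_sup (f := fun β => psiW l 1 (β + (e j).2)) hsup
    have h2 : psiW l 1 ((e j + γ).2) = psiW l 1 (γ.2 + (e j).2) := by
      rw [Prod.snd_add, add_comm]
    rw [h2]
    refine le_trans h1 (le_trans (Finset.le_sup (f := fun j : Fin r =>
      (((Qs j).support ∪ (Qs' j).support).sup fun β => psiW l 1 (β + (e j).2)))
      (Finset.mem_univ j)) le_sup_left)
  have hR_psi : ∀ v : Expo n q, coeffOf (R - R') v ≠ 0 → psiW l 1 v.2 ≤ Bu := by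
    intro v hne
    have hsup : v.2 ∈ R.support ∪ R'.support := by
      rw [coeffOf_sub, sub_ne_zero] at hne
      rcases ne_or_eq (coeffOf R v) 0 with h1 | h1
      · exact Finset.mem_union_left _ (coeffOf_ne_zero_mem_support _ _ h1)
      · rw [h1] at hne
        exact Finset.mem_union_right _ (coeffOf_ne_zero_mem_support _ _ (Ne.symm hne))
    exact le_trans (Finset.le_sup (f := fun β => psiW l 1 β) hsup) le_sup_right
  -- inLoc facts
  have hLocDq : ∀ j (γ : Expo n q), inLoc h (coeffOf (Qs j - Qs' j) γ) := by
    intro j γ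
    rw [coeffOf_sub]
    exact inLoc_sub h (hsol.2.1 j γ) (hsol'.2.1 j γ)
  have hQLdT : ∀ v : Expo n q, inLocIdeal h Q (coeffOf (T - T') v) := by
    intro v
    rw [coeffOf_sub]
    exact inLocIdeal_sub h Q (hsol.2.2.2.2.1 v) (hsol'.2.2.2.2.1 v)
  -- the main induction
  have main : ∀ v : Expo n q,
      (∀ j (γ : Expo n q), e j + γ = v → v ∈ DeltaJ e j →
          inLocIdeal h Q (coeffOf (Qs j - Qs' j) γ)) ∧
      (v ∈ DeltaBar e → inLocIdeal h Q (coeffOf (R - R') v)) := by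
    intro v
    refine (RRel_wf l lt0 1 Bu le_rfl hlt0_wf).induction
      (C := fun v => (∀ j (γ : Expo n q), e j + γ = v → v ∈ DeltaJ e j →
          inLocIdeal h Q (coeffOf (Qs j - Qs' j) γ)) ∧
        (v ∈ DeltaBar e → inLocIdeal h Q (coeffOf (R - R') v))) v fun v IH => ?_
    by_cases hψv : psiW l 1 v.2 ≤ Bu
    · -- main case: use the equation at v
      -- split the triple sum into lead and rest
      have hterm : ∀ j : Fin r, ∀ bp ∈ Finset.HasAntidiagonal.antidiagonal v.2, ∀ ap ∈ Finset.HasAntidiagonal.antidiagonal v.1,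
          coeffOf (Qs j - Qs' j) (ap.1, bp.1) * ι (coeffOf (P j) (ap.2, bp.2))
            = (if ((ap.2, bp.2) : Expo n q) = e j
                then coeffOf (Qs j - Qs' j) (ap.1, bp.1) * ι (coeffOf (P j) (e j)) else 0)
              + (if ((ap.2, bp.2) : Expo n q) = e j then 0
                else coeffOf (Qs j - Qs' j) (ap.1, bp.1) * ι (coeffOf (P j) (ap.2, bp.2))) := by
        intro j bp _ ap _
        by_cases hd : ((ap.2, bp.2) : Expo n q) = e j
        · rw [if_pos hd, if_pos hd, add_zero, hd]
        · rw [if_neg hd, if_neg hd, zero_add]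
      have hsum : (∑ j : Fin r, ∑ bp ∈ Finset.HasAntidiagonal.antidiagonal v.2, ∑ ap ∈ Finset.HasAntidiagonal.antidiagonal v.1,
            coeffOf (Qs j - Qs' j) (ap.1, bp.1) * ι (coeffOf (P j) (ap.2, bp.2)))
          = (∑ j : Fin r, if (e j).1 ≤ v.1 ∧ (e j).2 ≤ v.2
              then coeffOf (Qs j - Qs' j) (v.1 - (e j).1, v.2 - (e j).2)
                * ι (coeffOf (P j) (e j)) else 0)
            + (∑ j : Fin r, ∑ bp ∈ Finset.HasAntidiagonal.antidiagonal v.2, ∑ ap ∈ Finset.HasAntidiagonal.antidiagonal v.1,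
                (if ((ap.2, bp.2) : Expo n q) = e j then 0
                 else coeffOf (Qs j - Qs' j) (ap.1, bp.1) * ι (coeffOf (P j) (ap.2, bp.2)))) := by
        rw [← Finset.sum_add_distrib]
        refine Finset.sum_congr rfl fun j _ => ?_
        rw [← sum_AD2 v (e j)
            (fun γ => coeffOf (Qs j - Qs' j) γ * ι (coeffOf (P j) (e j))),
          ← Finset.sum_add_distrib]
        refine Finset.sum_congr rfl fun bp hbp => ?_
        rw [← Finset.sum_add_distrib]
        exact Finset.sum_congr rfl fun ap hap => hterm j bp hbp ap hap
      -- the rest sum is in Q·C[h⁻¹]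
      have hrest : inLocIdeal h Q
          (∑ j : Fin r, ∑ bp ∈ Finset.HasAntidiagonal.antidiagonal v.2, ∑ ap ∈ Finset.HasAntidiagonal.antidiagonal v.1,
            (if ((ap.2, bp.2) : Expo n q) = e j then 0
             else coeffOf (Qs j - Qs' j) (ap.1, bp.1) * ι (coeffOf (P j) (ap.2, bp.2)))) := by
        refine inLocIdeal_sum h Q _ _ fun j _ => inLocIdeal_sum h Q _ _ fun bp hbp =>
          inLocIdeal_sum h Q _ _ fun ap hap => ?_
        rw [Finset.HasAntidiagonal.mem_antidiagonal] at hbp hap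
        by_cases hd : ((ap.2, bp.2) : Expo n q) = e j
        · rw [if_pos hd]; exact inLocIdeal_zero h Q
        rw [if_neg hd]
        by_cases hp : PrecL l lt0 (ap.2, bp.2) (e j)
        · -- use the inductive hypothesis at w = e j + (ap.1, bp.1)
          by_cases hw : (e j + ((ap.1, bp.1) : Expo n q)) ∈ DeltaJ e j
          · by_cases hψw : psiW l 1 (e j + ((ap.1, bp.1) : Expo n q)).2 ≤ Bu
            · have hIH := (IH _ (RRel_of_guard l lt0 e 1 Bu hlt0_add hψv hp hψw hap hbp)).1
                j (ap.1, bp.1) rfl hw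
              rw [mul_comm]
              exact inLocIdeal_mul_loc h Q (inLoc_alg h _) hIH
            · have h0 : coeffOf (Qs j - Qs' j) (ap.1, bp.1) = 0 := by
                by_contra hne
                exact hψw (hdq_psi j (ap.1, bp.1) hne)
              rw [h0, zero_mul]
              exact inLocIdeal_zero h Q
          · rw [hDside j (ap.1, bp.1) hw, zero_mul]
            exact inLocIdeal_zero h Q
        · -- the divisor coefficient lies in Q
          have hcQ : coeffOf (P j) (ap.2, bp.2) ∈ Q := by
            apply he2
            rintro (h1 | h1)
            exacts [hd h1, hp h1]
          exact inLocIdeal_mul_loc h Q (hLocDq j (ap.1, bp.1)) (inLocIdeal_alg h Q hcQ)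
      by_cases hex : ∃ j0, v ∈ DeltaJ e j0
      · obtain ⟨j0, hj0⟩ := hex
        constructor
        · intro j γ hγv hmem
          -- the lead sum reduces to the single j-term
          have hle := inShift_iff_le.mp hmem.1
          have hvs : e j + ((v.1 - (e j).1, v.2 - (e j).2) : Expo n q) = v := by
            refine pair_eq (add_tsub_cancel_of_le hle.1) (add_tsub_cancel_of_le hle.2)
          have hlead : (∑ j' : Fin r, if (e j').1 ≤ v.1 ∧ (e j').2 ≤ v.2
              then coeffOf (Qs j' - Qs' j') (v.1 - (e j').1, v.2 - (e j').2)
                * ι (coeffOf (P j') (e j')) else 0)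
              = coeffOf (Qs j - Qs' j) (v.1 - (e j).1, v.2 - (e j).2)
                * ι (coeffOf (P j) (e j)) := by
            rw [Finset.sum_eq_single_of_mem j (Finset.mem_univ j)]
            · rw [if_pos ⟨hle.1, hle.2⟩]
            · intro j' _ hne
              by_cases hlej : (e j').1 ≤ v.1 ∧ (e j').2 ≤ v.2
              · have hvsj : e j' + ((v.1 - (e j').1, v.2 - (e j').2) : Expo n q) = v := by
                  refine pair_eq (add_tsub_cancel_of_le hlej.1) (add_tsub_cancel_of_le hlej.2)
                have hnotin : ¬ (e j' + ((v.1 - (e j').1, v.2 - (e j').2) : Expo n q)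
                    ∈ DeltaJ e j') := by
                  rw [hvsj]
                  intro hw
                  exact hne (deltaJ_unique e hw hmem)
                rw [if_pos hlej, hDside j' _ hnotin, zero_mul]
              · rw [if_neg hlej]
          have hzero := heq v
          rw [hsum, hlead, hRside v (deltaJ_not_bar e hmem)] at hzero
          have hQL : inLocIdeal h Q (coeffOf (Qs j - Qs' j) (v.1 - (e j).1, v.2 - (e j).2)
              * ι (coeffOf (P j) (e j))) := by
            have hx : coeffOf (Qs j - Qs' j) (v.1 - (e j).1, v.2 - (e j).2)
                * ι (coeffOf (P j) (e j))
                = -((∑ j : Fin r, ∑ bp ∈ Finset.HasAntidiagonal.antidiagonal v.2,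
                    ∑ ap ∈ Finset.HasAntidiagonal.antidiagonal v.1,
                    (if ((ap.2, bp.2) : Expo n q) = e j then 0
                     else coeffOf (Qs j - Qs' j) (ap.1, bp.1)
                       * ι (coeffOf (P j) (ap.2, bp.2))))
                  + coeffOf (T - T') v) := by
              rw [eq_neg_iff_add_eq_zero]
              calc _ = coeffOf (Qs j - Qs' j) (v.1 - (e j).1, v.2 - (e j).2)
                    * ι (coeffOf (P j) (e j))
                  + (∑ j : Fin r, ∑ bp ∈ Finset.HasAntidiagonal.antidiagonal v.2,
                      ∑ ap ∈ Finset.HasAntidiagonal.antidiagonal v.1,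
                      (if ((ap.2, bp.2) : Expo n q) = e j then 0
                       else coeffOf (Qs j - Qs' j) (ap.1, bp.1)
                         * ι (coeffOf (P j) (ap.2, bp.2))))
                  + 0 + coeffOf (T - T') v := by ring
                _ = 0 := hzero
            rw [hx]
            exact inLocIdeal_neg h Q (inLocIdeal_add h Q hrest (hQLdT v))
          obtain ⟨g, hg⟩ := hdvd j
          have := inLocIdeal_cancel h Q hg hQL
          have hγ' : ((v.1 - (e j).1, v.2 - (e j).2) : Expo n q) = γ := by
            rw [← hγv]
            exact pair_eq (add_tsub_cancel_left _ _) (add_tsub_cancel_left _ _)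
          rwa [hγ'] at this
        · intro hbarv
          exact absurd hbarv (deltaJ_not_bar e hj0)
      · have hbar : v ∈ DeltaBar e := fun j hsh => hex (exists_deltaJ e hsh)
        refine ⟨fun j γ hγv hmem => absurd ⟨j, hmem⟩ hex, fun _ => ?_⟩
        have hlead : (∑ j' : Fin r, if (e j').1 ≤ v.1 ∧ (e j').2 ≤ v.2
            then coeffOf (Qs j' - Qs' j') (v.1 - (e j').1, v.2 - (e j').2)
              * ι (coeffOf (P j') (e j')) else 0) = 0 := by
          refine Finset.sum_eq_zero fun j' _ => ?_
          by_cases hlej : (e j').1 ≤ v.1 ∧ (e j').2 ≤ v.2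
          · have hvsj : e j' + ((v.1 - (e j').1, v.2 - (e j').2) : Expo n q) = v := by
              refine pair_eq (add_tsub_cancel_of_le hlej.1) (add_tsub_cancel_of_le hlej.2)
            have hnotin : ¬ (e j' + ((v.1 - (e j').1, v.2 - (e j').2) : Expo n q)
                ∈ DeltaJ e j') := by
              rw [hvsj]
              intro hw
              exact hbar j' hw.1
            rw [if_pos hlej, hDside j' _ hnotin, zero_mul]
          · rw [if_neg hlej]
        have hzero := heq v
        rw [hsum, hlead, zero_add] at hzero
        have hx : coeffOf (R - R') v
            = -((∑ j : Fin r, ∑ bp ∈ Finset.HasAntidiagonal.antidiagonal v.2,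
                ∑ ap ∈ Finset.HasAntidiagonal.antidiagonal v.1,
                (if ((ap.2, bp.2) : Expo n q) = e j then 0
                 else coeffOf (Qs j - Qs' j) (ap.1, bp.1)
                   * ι (coeffOf (P j) (ap.2, bp.2))))
              + coeffOf (T - T') v) := by
          rw [eq_neg_iff_add_eq_zero]
          calc _ = (∑ j : Fin r, ∑ bp ∈ Finset.HasAntidiagonal.antidiagonal v.2,
                ∑ ap ∈ Finset.HasAntidiagonal.antidiagonal v.1,
                (if ((ap.2, bp.2) : Expo n q) = e j then 0
                 else coeffOf (Qs j - Qs' j) (ap.1, bp.1)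
                   * ι (coeffOf (P j) (ap.2, bp.2))))
              + coeffOf (R - R') v + coeffOf (T - T') v := by ring
            _ = 0 := hzero
        rw [hx]
        exact inLocIdeal_neg h Q (inLocIdeal_add h Q hrest (hQLdT v))
    · -- outside the region: all coefficients vanish
      constructor
      · intro j γ hγv _
        have h0 : coeffOf (Qs j - Qs' j) γ = 0 := by
          by_contra hne
          have := hdq_psi j γ hne
          rw [hγv] at this
          exact hψv this
        rw [h0]
        exact inLocIdeal_zero h Q
      · intro _
        have h0 : coeffOf (R - R') v = 0 := by
          by_contra hne
          exact hψv (hR_psi v hne)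
        rw [h0]
        exact inLocIdeal_zero h Q
  -- conclude
  constructor
  · intro j γ
    by_cases hmem : (e j + γ) ∈ DeltaJ e j
    · exact (main (e j + γ)).1 j γ rfl hmem
    · rw [hDside j γ hmem]
      exact inLocIdeal_zero h Q
  · intro v
    by_cases hmem : v ∈ DeltaBar e
    · exact (main v).2 hmem
    · rw [hRside v hmem]
      exact inLocIdeal_zero h Q

end Uniqueness

section Existence

lemma division_exists
    {n q r : ℕ} {C : Type} [CommRing C] [IsDomain C]
    (Q : Ideal C) (hQ : Q.IsPrime)
    (l : Fin q → ℕ) (lt0 : Expo n q → Expo n q → Prop)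
    (hlt0_wf : WellFounded lt0)
    (hlt0_add : ∀ a b c : Expo n q, lt0 a b → lt0 (a + c) (b + c))
    (P : Fin r → Rxz n q C) (e : Fin r → Expo n q)
    (he : ∀ j, IsPrivExp (PrecL l lt0) (specHom Q (P j)) (e j))
    (h : C) (hh : h = ∏ j, coeffOf (P j) (e j))
    (F : Rxz n q C) :
    ∃ (Qs : Fin r → Rxz n q (FractionRing C)) (R T : Rxz n q (FractionRing C)),
      IsDivModQ Q h P e F Qs R T := by
  classical
  haveI := hQ
  set K := FractionRing C with hK
  set ι : C →+* K := (algebraMap C (FractionRing C) : C →+* K) with hι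
  have hinj : Function.Injective ι := IsFractionRing.injective C (FractionRing C)
  have hccQ : ∀ j, coeffOf (P j) (e j) ∉ Q := by
    intro j hmem
    have h1 := (he j).1
    rw [coeffOf_specHom] at h1
    exact h1 ((spec_zero_iff hQ _).mpr hmem)
  have hcc0 : ∀ j, coeffOf (P j) (e j) ≠ 0 := by
    intro j h0
    exact hccQ j (by rw [h0]; exact Q.zero_mem)
  have he2 : ∀ j δ, ¬(δ = e j ∨ PrecL l lt0 δ (e j)) → coeffOf (P j) δ ∈ Q := by
    intro j δ hδ
    by_contra hmem
    have h1 : coeffOf (specHom Q (P j)) δ ≠ 0 := by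
      rw [coeffOf_specHom]
      exact fun h0 => hmem ((spec_zero_iff hQ _).mp h0)
    exact hδ ((he j).2 δ h1)
  have hdvd : ∀ j, ∃ g, h = coeffOf (P j) (e j) * g := by
    intro j
    refine ⟨∏ k ∈ Finset.univ.erase j, coeffOf (P k) (e k), ?_⟩
    rw [hh]
    exact (Finset.mul_prod_erase Finset.univ (fun k => coeffOf (P k) (e k))
      (Finset.mem_univ j)).symm
  -- division data
  set D : ℕ := Finset.univ.sup (fun j => (P j).totalDegree) with hD
  set M : ℕ := D + 1 with hM
  have hM1 : 1 ≤ M := Nat.le_add_left 1 D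
  set a : Fin r → Expo n q → K := fun j δ => ι (coeffOf (P j) δ) with ha
  set cK : Fin r → K := fun j => ι (coeffOf (P j) (e j)) with hcKd
  set Fc : Expo n q → K := fun v => ι (coeffOf F v) with hFcdef
  set Bp : ℕ := F.support.sup (fun β => psiW l M β) with hBp
  have hcKa : ∀ j, cK j = a j (e j) := fun j => rfl
  have hcK0 : ∀ j, cK j ≠ 0 := by
    intro j h0
    exact hcc0 j (hinj (by rw [map_zero]; exact h0))
  have hamono : ∀ j δ, a j δ ≠ 0 → PrecL l lt0 δ (e j) →
      psiW l M δ.2 ≤ psiW l M (e j).2 := by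
    intro j δ hane hp
    have hc : coeffOf (P j) δ ≠ 0 := by
      intro h0
      exact hane (by rw [ha]; show ι (coeffOf (P j) δ) = 0; rw [h0, map_zero])
    have hsup : δ.2 ∈ (P j).support := coeffOf_ne_zero_mem_support _ _ hc
    have hd1 : degSum δ.2 ≤ D := by
      have h1 := MvPolynomial.le_totalDegree hsup
      rw [degSum_eq_finsupp_sum] at h1
      exact le_trans h1 (Finset.le_sup (f := fun j => (P j).totalDegree) (Finset.mem_univ j))
    rcases hp with hL | ⟨hL, hD2 | ⟨hD2, _⟩⟩
    · have h1 := Nat.mul_le_mul_left M hL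
      rw [Nat.mul_succ] at h1
      simp only [psiW]
      omega
    · simp only [psiW]
      rw [hL]
      omega
    · simp only [psiW]
      rw [hL, hD2]
  have hFcbound : ∀ v, ¬ psiW l M v.2 ≤ Bp → Fc v = 0 := by
    intro v hψ
    by_contra hne
    have hcne : coeffOf F v ≠ 0 := by
      intro h0
      exact hne (by rw [hFcdef]; show ι (coeffOf F v) = 0; rw [h0, map_zero])
    exact hψ (Finset.le_sup (f := fun β => psiW l M β)
      (coeffOf_ne_zero_mem_support F v hcne))
  -- the constructed coefficient functions
  have hdivf_psi : ∀ v, ¬ psiW l M v.2 ≤ Bp →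
      divF l lt0 hlt0_add e a cK Fc M Bp hM1 hlt0_wf v = 0 := by
    intro v hψ
    exact divF_zero_of_psi l lt0 hlt0_add e a cK Fc M Bp hM1 hlt0_wf hψ
  have hdivf_loc : ∀ v, inLoc h (divF l lt0 hlt0_add e a cK Fc M Bp hM1 hlt0_wf v) := by
    refine divF_mem l lt0 hlt0_add e a cK Fc M Bp hM1 hlt0_wf (inLoc h) (inLoc_zero h)
      (inLoc_one h) (fun x y hx hy => inLoc_add h hx hy) (fun x y hx hy => inLoc_sub h hx hy)
      (fun x y hx hy => inLoc_mul h hx hy) (fun j δ => inLoc_alg h _)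
      (fun v => inLoc_alg h _) (fun j => ?_)
    obtain ⟨g, hg⟩ := hdvd j
    exact inLoc_inv h hg (hcK0 j)
  have hQc_loc : ∀ j γ, inLoc h (QcF l lt0 hlt0_add e a cK Fc M Bp hM1 hlt0_wf j γ) := by
    intro j γ
    rw [QcF]
    split
    · exact hdivf_loc _
    · exact inLoc_zero h
  have hrho_loc : ∀ v, inLoc h (rhoF l lt0 hlt0_add e a cK Fc M Bp hM1 hlt0_wf v) := by
    intro v
    rw [rhoF]
    split
    · exact hdivf_loc _
    · exact inLoc_zero h
  -- the elements
  set topβ : Fin q →₀ ℕ := Finsupp.equivFunOnFinite.symm (fun _ => Bp) with htop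
  set Sβ : Finset (Fin q →₀ ℕ) := Finset.Iic topβ with hSβ
  have hmemβ : ∀ β : Fin q →₀ ℕ, degSum β ≤ Bp → β ∈ Sβ := by
    intro β hβ
    rw [hSβ, Finset.mem_Iic, Finsupp.le_def]
    intro i
    have h1 : β i ≤ degSum β := degSum_apply_le β i
    have h2 : topβ i = Bp := rfl
    omega
  set Qs : Fin r → Rxz n q K := fun j =>
    mkRxz Sβ (fun γ => QcF l lt0 hlt0_add e a cK Fc M Bp hM1 hlt0_wf j γ) with hQsdef
  set R : Rxz n q K := mkRxz Sβ (fun v => rhoF l lt0 hlt0_add e a cK Fc M Bp hM1 hlt0_wf v)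
    with hRdef
  set T : Rxz n q K := toFracHom F - (∑ j, Qs j * toFracHom (P j)) - R with hTdef
  have hQs_coeff : ∀ j γ, coeffOf (Qs j) γ
      = QcF l lt0 hlt0_add e a cK Fc M Bp hM1 hlt0_wf j γ := by
    intro j γ
    rw [hQsdef]
    rw [coeffOf_mkRxz]
    split
    · rfl
    · next hβ =>
      by_cases h0 : QcF l lt0 hlt0_add e a cK Fc M Bp hM1 hlt0_wf j γ = 0
      · rw [h0]
      · exfalso
        apply hβ
        apply hmemβ
        have h1 : psiW l M (e j + γ).2 ≤ Bp := by
          by_contra hψ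
          apply h0
          rw [QcF, hdivf_psi _ hψ]
          split <;> rfl
        have h2 : psiW l M (e j + γ).2 = psiW l M (e j).2 + psiW l M γ.2 := by
          rw [Prod.snd_add, psiW_add]
        have h3 := degSum_le_psiW l M γ.2
        omega
  have hR_coeff : ∀ v, coeffOf R v
      = rhoF l lt0 hlt0_add e a cK Fc M Bp hM1 hlt0_wf v := by
    intro v
    rw [hRdef, coeffOf_mkRxz]
    split
    · rfl
    · next hβ =>
      by_cases h0 : rhoF l lt0 hlt0_add e a cK Fc M Bp hM1 hlt0_wf v = 0
      · rw [h0]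
      · exfalso
        apply hβ
        apply hmemβ
        have h1 : psiW l M v.2 ≤ Bp := by
          by_contra hψ
          apply h0
          rw [rhoF, hdivf_psi _ hψ]
          split <;> rfl
        have h3 := degSum_le_psiW l M v.2
        omega
  -- the coefficients of T
  have hTcoeff : ∀ v, coeffOf T v
      = ∑ j : Fin r, ∑ bp ∈ Finset.HasAntidiagonal.antidiagonal v.2, ∑ ap ∈ Finset.HasAntidiagonal.antidiagonal v.1,
          QcF l lt0 hlt0_add e a cK Fc M Bp hM1 hlt0_wf j (ap.1, bp.1)
            * (pcF l lt0 e a j (ap.2, bp.2) - a j (ap.2, bp.2)) := by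
    intro v
    rw [hTdef, coeffOf_sub, coeffOf_sub, coeffOf_sum, coeffOf_toFracHom]
    have hj : ∀ j ∈ Finset.univ, coeffOf (Qs j * toFracHom (P j)) v
        = ∑ bp ∈ Finset.HasAntidiagonal.antidiagonal v.2, ∑ ap ∈ Finset.HasAntidiagonal.antidiagonal v.1,
            QcF l lt0 hlt0_add e a cK Fc M Bp hM1 hlt0_wf j (ap.1, bp.1)
              * a j (ap.2, bp.2) := by
      intro j _
      rw [coeffOf_mul]
      refine Finset.sum_congr rfl fun bp _ => Finset.sum_congr rfl fun ap _ => ?_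
      rw [hQs_coeff j (ap.1, bp.1), coeffOf_toFracHom]
    rw [Finset.sum_congr rfl hj, hR_coeff v]
    have hid := divF_identity l lt0 hlt0_add e a cK Fc M Bp hM1 hlt0_wf hcKa hcK0 hamono
      hFcbound v
    have hsplit : (∑ j : Fin r, ∑ bp ∈ Finset.HasAntidiagonal.antidiagonal v.2,
          ∑ ap ∈ Finset.HasAntidiagonal.antidiagonal v.1,
          QcF l lt0 hlt0_add e a cK Fc M Bp hM1 hlt0_wf j (ap.1, bp.1)
            * (pcF l lt0 e a j (ap.2, bp.2) - a j (ap.2, bp.2)))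
        = (∑ j : Fin r, ∑ bp ∈ Finset.HasAntidiagonal.antidiagonal v.2, ∑ ap ∈ Finset.HasAntidiagonal.antidiagonal v.1,
            QcF l lt0 hlt0_add e a cK Fc M Bp hM1 hlt0_wf j (ap.1, bp.1)
              * pcF l lt0 e a j (ap.2, bp.2))
          - (∑ j : Fin r, ∑ bp ∈ Finset.HasAntidiagonal.antidiagonal v.2, ∑ ap ∈ Finset.HasAntidiagonal.antidiagonal v.1,
            QcF l lt0 hlt0_add e a cK Fc M Bp hM1 hlt0_wf j (ap.1, bp.1)
              * a j (ap.2, bp.2)) := by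
      rw [← Finset.sum_sub_distrib]
      refine Finset.sum_congr rfl fun j _ => ?_
      rw [← Finset.sum_sub_distrib]
      refine Finset.sum_congr rfl fun bp _ => ?_
      rw [← Finset.sum_sub_distrib]
      exact Finset.sum_congr rfl fun ap _ => mul_sub _ _ _
    rw [show (ι (coeffOf F v) : K) = Fc v from rfl, hsplit, ← hid]
    ring
  have hTQL : ∀ v, inLocIdeal h Q (coeffOf T v) := by
    intro v
    rw [hTcoeff v]
    refine inLocIdeal_sum h Q _ _ fun j _ => inLocIdeal_sum h Q _ _ fun bp _ =>
      inLocIdeal_sum h Q _ _ fun ap _ => ?_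
    by_cases hc : ((ap.2, bp.2) : Expo n q) = e j ∨ PrecL l lt0 (ap.2, bp.2) (e j)
    · have h1 : pcF l lt0 e a j (ap.2, bp.2) - a j (ap.2, bp.2) = 0 := by
        rw [pcF, if_pos hc, sub_self]
      rw [h1, mul_zero]
      exact inLocIdeal_zero h Q
    · have h1 : pcF l lt0 e a j (ap.2, bp.2) - a j (ap.2, bp.2) = -(ι (coeffOf (P j) (ap.2, bp.2))) := by
        rw [pcF, if_neg hc, zero_sub]
      rw [h1, mul_neg]
      exact inLocIdeal_neg h Q (inLocIdeal_mul_loc h Q (hQc_loc j (ap.1, bp.1))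
        (inLocIdeal_alg h Q (he2 j (ap.2, bp.2) hc)))
  refine ⟨Qs, R, T, ?_, ?_, ?_, ?_, ?_, ?_, ?_⟩
  · rw [hTdef]
    ring
  · intro j d
    rw [hQs_coeff]
    exact hQc_loc j d
  · intro d
    rw [hR_coeff]
    exact hrho_loc d
  · intro d
    exact inLocIdeal_inLoc h Q (hTQL d)
  · exact hTQL
  · intro j
    right
    intro d hd
    have hd' : coeffOf (Qs j) d ≠ 0 := hd
    rw [hQs_coeff, QcF] at hd'
    by_cases hmem : (e j + d) ∈ DeltaJ e j
    · rwa [add_comm]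
    · rw [if_neg hmem] at hd'
      exact absurd rfl hd'
  · right
    intro d hd
    have hd' : coeffOf R d ≠ 0 := hd
    rw [hR_coeff, rhoF] at hd'
    by_cases hmem : d ∈ DeltaBar e
    · exact hmem
    · rw [if_neg hmem] at hd'
      exact absurd rfl hd'

end Existence

/-- Division modulo Q (commutative case of Proposition 3.5): existence, with denominators
only powers of h = ∏_j cp^modQ_≺(P_j) ∈ C \ Q, and uniqueness of (Q_1, …, Q_r, R) modulo
elements with all coefficients in Q·C[h⁻¹]. -/
theorem division_mod_Q
    (n q : ℕ) (hn : 0 < n) (hq : 0 < q)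
    (C : Type) [CommRing C] [IsDomain C] [Algebra ℚ C]
    (Q : Ideal C) (hQ : Q.IsPrime)
    (l : Fin q → ℕ)
    (lt0 : Expo n q → Expo n q → Prop)
    (hlt0_tri : ∀ a b : Expo n q, lt0 a b ∨ a = b ∨ lt0 b a)
    (hlt0_trans : ∀ a b c : Expo n q, lt0 a b → lt0 b c → lt0 a c)
    (hlt0_wf : WellFounded lt0)
    (hlt0_add : ∀ a b c : Expo n q, lt0 a b → lt0 (a + c) (b + c))
    (r : ℕ) (P : Fin r → Rxz n q C) (hP : ∀ j, ¬ allCoeffIn Q (P j))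
    (e : Fin r → Expo n q)
    (he : ∀ j, IsPrivExp (PrecL l lt0) (specHom Q (P j)) (e j))
    (h : C) (hh : h = ∏ j, coeffOf (P j) (e j))
    (F : Rxz n q C) :
    h ∉ Q ∧
    ∃ (Qs : Fin r → Rxz n q (FractionRing C)) (R T : Rxz n q (FractionRing C)),
      IsDivModQ Q h P e F Qs R T ∧
      ∀ (Qs' : Fin r → Rxz n q (FractionRing C)) (R' T' : Rxz n q (FractionRing C)),
        IsDivModQ Q h P e F Qs' R' T' →
        (∀ j d, inLocIdeal h Q (coeffOf (Qs j - Qs' j) d)) ∧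
        (∀ d, inLocIdeal h Q (coeffOf (R - R') d)) := by
  classical
  haveI := hQ
  have hccQ : ∀ j, coeffOf (P j) (e j) ∉ Q := by
    intro j hmem
    have h1 := (he j).1
    rw [coeffOf_specHom] at h1
    exact h1 ((spec_zero_iff hQ _).mpr hmem)
  have hhQ : h ∉ Q := by
    rw [hh]
    refine Finset.prod_induction _ (fun x => x ∉ Q) (fun x y hx hy hxy => ?_) (fun h1 => ?_)
      (fun j _ => hccQ j)
    · rcases hQ.mem_or_mem hxy with hm | hm
      exacts [hx hm, hy hm]
    · exact hQ.ne_top ((Ideal.eq_top_iff_one Q).mpr h1)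
  refine ⟨hhQ, ?_⟩
  obtain ⟨Qs, R, T, hsol⟩ := division_exists Q hQ l lt0 hlt0_wf hlt0_add P e he h hh F
  have he2 : ∀ j δ, ¬(δ = e j ∨ PrecL l lt0 δ (e j)) → coeffOf (P j) δ ∈ Q := by
    intro j δ hδ
    by_contra hmem
    have h1 : coeffOf (specHom Q (P j)) δ ≠ 0 := by
      rw [coeffOf_specHom]
      exact fun h0 => hmem ((spec_zero_iff hQ _).mp h0)
    exact hδ ((he j).2 δ h1)
  have hdvd : ∀ j, ∃ g, h = coeffOf (P j) (e j) * g := by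
    intro j
    refine ⟨∏ k ∈ Finset.univ.erase j, coeffOf (P k) (e k), ?_⟩
    rw [hh]
    exact (Finset.mul_prod_erase Finset.univ (fun k => coeffOf (P k) (e k))
      (Finset.mem_univ j)).symm
  refine ⟨Qs, R, T, hsol, ?_⟩
  intro Qs' R' T' hsol'
  exact division_unique Q hQ l lt0 hlt0_wf hlt0_add P e he2 h hdvd F Qs Qs' R R' T T'
    hsol hsol'


end
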